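/- Assuming the bound μ(π) ≤ 7.6064 (i.e., for every k > 7.6064, |π − p/q| < 1/q^k has only finitely many coprime positive integer solutions), the series ∑_{n=1}^∞ 1/(n^8 · |sin n|) converges. -/

import Mathlib

open Filter
open Real in
theorem series_n8_sin_converges
    (hmu : ∀ k : ℝ, 7.6064 < k →
      {pq : ℕ × ℕ | 0 < pq.1 ∧ 0 < pq.2 ∧ Nat.Coprime pq.1 pq.2 ∧
        |π - (pq.1 : ℝ) / (pq.2 : ℝ)| < 1 / (pq.2 : ℝ) ^ k}.Finite) :
    Summable (fun n : ℕ => 1 / ((n : ℝ) ^ 8 * |Real.sin n|)) := by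
  classical
  set k : ℝ := 7.61 with hkdef
  have hk0 : (0:ℝ) ≤ k := by norm_num [hkdef]
  have hS := hmu k (by norm_num [hkdef])
  set g : ℕ × ℕ → ℝ := fun pq => |π - (pq.1 : ℝ) / (pq.2 : ℝ)| with hgdef
  set F : Finset ℝ := insert 1 (hS.toFinset.image g) with hFdef
  have hFne : F.Nonempty := ⟨1, Finset.mem_insert_self _ _⟩
  set ε : ℝ := F.min' hFne with hεdef
  have hε1 : ε ≤ 1 := Finset.min'_le _ _ (Finset.mem_insert_self _ _)
  have hgpos : ∀ pq ∈ hS.toFinset, 0 < g pq := by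
    intro pq hpq
    rw [Set.Finite.mem_toFinset] at hpq
    obtain ⟨hp, hq, -, -⟩ := hpq
    have hne : π ≠ (pq.1 : ℝ) / (pq.2 : ℝ) := by
      intro h
      exact irrational_pi ⟨(pq.1 : ℚ) / (pq.2 : ℚ), by push_cast; exact h.symm⟩
    simpa [hgdef, abs_pos, sub_ne_zero] using hne
  have hε0 : 0 < ε := by
    rw [hεdef, Finset.lt_min'_iff]
    intro b hb
    rcases Finset.mem_insert.1 hb with h | h
    · rw [h]; norm_num
    · obtain ⟨pq, hpq, hpq'⟩ := Finset.mem_image.1 h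
      rw [← hpq']
      exact hgpos pq hpq
  have hεle : ∀ pq : ℕ × ℕ, pq ∈ hS.toFinset → ε ≤ g pq := by
    intro pq hpq
    exact Finset.min'_le _ _ (Finset.mem_insert_of_mem (Finset.mem_image_of_mem g hpq))
  -- key diophantine bound for all positive pairs
  have key : ∀ p q : ℕ, 0 < p → 0 < q → ε / (q : ℝ) ^ k ≤ |π - (p : ℝ) / (q : ℝ)| := by
    intro p q hp hq
    set d := Nat.gcd p q with hd
    have hd0 : 0 < d := Nat.gcd_pos_of_pos_left _ hp
    set p' := p / d with hp'def
    set q' := q / d with hq'def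
    have hp'0 : 0 < p' := Nat.div_pos (Nat.le_of_dvd hp (Nat.gcd_dvd_left p q)) hd0
    have hq'0 : 0 < q' := Nat.div_pos (Nat.le_of_dvd hq (Nat.gcd_dvd_right p q)) hd0
    have hcop : Nat.Coprime p' q' := Nat.coprime_div_gcd_div_gcd hd0
    have hpp : p' * d = p := Nat.div_mul_cancel (Nat.gcd_dvd_left p q)
    have hqq : q' * d = q := Nat.div_mul_cancel (Nat.gcd_dvd_right p q)
    have hpR : (p : ℝ) = (p' : ℝ) * d := by exact_mod_cast hpp.symm
    have hqR : (q : ℝ) = (q' : ℝ) * d := by exact_mod_cast hqq.symm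
    have hdR : (d : ℝ) ≠ 0 := by exact_mod_cast hd0.ne'
    have hfrac : (p : ℝ) / (q : ℝ) = (p' : ℝ) / (q' : ℝ) := by
      rw [hpR, hqR, mul_div_mul_right _ _ hdR]
    have hq1 : (1 : ℝ) ≤ (q : ℝ) := by exact_mod_cast hq
    have hqk1 : (1 : ℝ) ≤ (q : ℝ) ^ k := by
      simpa using Real.rpow_le_rpow_of_exponent_le hq1 hk0
    by_cases hmem : (p', q') ∈ hS.toFinset
    · have h1 : ε ≤ |π - (p' : ℝ) / (q' : ℝ)| := hεle (p', q') hmem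
      calc ε / (q : ℝ) ^ k ≤ ε := div_le_self hε0.le hqk1
        _ ≤ |π - (p' : ℝ) / (q' : ℝ)| := h1
        _ = |π - (p : ℝ) / (q : ℝ)| := by rw [hfrac]
    · rw [Set.Finite.mem_toFinset, Set.mem_setOf_eq] at hmem
      push_neg at hmem
      have h1 : 1 / (q' : ℝ) ^ k ≤ |π - (p' : ℝ) / (q' : ℝ)| := hmem hp'0 hq'0 hcop
      have hq'q : (q' : ℝ) ≤ (q : ℝ) := by exact_mod_cast Nat.div_le_self q d
      have hq'0R : (0 : ℝ) < (q' : ℝ) := by exact_mod_cast hq'0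
      have h2 : (q' : ℝ) ^ k ≤ (q : ℝ) ^ k := Real.rpow_le_rpow hq'0R.le hq'q hk0
      have hq'k0 : (0 : ℝ) < (q' : ℝ) ^ k := Real.rpow_pos_of_pos hq'0R k
      calc ε / (q : ℝ) ^ k ≤ 1 / (q : ℝ) ^ k := by gcongr
        _ ≤ 1 / (q' : ℝ) ^ k := by gcongr
        _ ≤ |π - (p' : ℝ) / (q' : ℝ)| := h1
        _ = |π - (p : ℝ) / (q : ℝ)| := by rw [hfrac]
  have hπ : (0:ℝ) < π := Real.pi_pos
  -- sine lower bound
  have hsin : ∀ n : ℕ, 2 ≤ n → 2 / π * (ε * (n : ℝ) ^ (1 - k)) ≤ |Real.sin n| := by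
    intro n hn
    have hn0 : (0:ℝ) < n := by positivity
    have hn2 : (2:ℝ) ≤ n := by exact_mod_cast hn
    set x : ℝ := (n : ℝ) / π with hx
    set m : ℤ := round x with hm
    have hround : |x - (m : ℝ)| ≤ 1 / 2 := abs_sub_round x
    have hround' := abs_le.1 hround
    have hπ315 : π < 3.15 := by
      have := Real.pi_lt_d2; linarith
    have hπ3 : (3:ℝ) < π := by have := Real.pi_gt_three; linarith
    have hxpos : (1:ℝ)/2 < x := by
      rw [hx, lt_div_iff₀ hπ]
      nlinarith
    have hm0 : (0:ℝ) < (m : ℝ) := by linarith [hround'.1]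
    have hm1 : 1 ≤ m := by
      have : (0:ℤ) < m := by exact_mod_cast hm0
      omega
    set M : ℕ := m.toNat with hM
    have hMm : (M : ℝ) = (m : ℝ) := by
      rw [hM]; exact_mod_cast Int.toNat_of_nonneg (by linarith)
    have hM0 : 0 < M := by omega
    have hMn : (M : ℝ) ≤ (n : ℝ) := by
      rw [hMm]
      have h1 : (m : ℝ) ≤ x + 1/2 := by linarith [hround'.2]
      have h2 : x < (n : ℝ) / 3 := by
        rw [hx]
        exact div_lt_div_of_pos_left hn0 (by norm_num) hπ3
      linarith
    have hkey := key n M (by omega) hM0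
    set y : ℝ := (n : ℝ) - (M : ℝ) * π with hy
    have hyabs : |y| ≤ π / 2 := by
      have : y = π * (x - (m : ℝ)) := by
        rw [hy, hx, hMm]; field_simp
      rw [this, abs_mul, abs_of_pos hπ]
      calc π * |x - (m:ℝ)| ≤ π * (1/2) := by gcongr
        _ = π / 2 := by ring
    have hM0R : (0:ℝ) < (M : ℝ) := by exact_mod_cast hM0
    have hylow : ε * (M : ℝ) ^ (1 - k) ≤ |y| := by
      have h0 : π - (n : ℝ) / (M : ℝ) = -(y / (M : ℝ)) := by
        rw [hy]; field_simp; ring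
      have h1 : |π - (n : ℝ) / (M : ℝ)| = |y| / (M : ℝ) := by
        rw [h0, abs_neg, abs_div, abs_of_pos hM0R]
      have h2 : ε / (M : ℝ) ^ k ≤ |y| / (M : ℝ) := by rw [← h1]; exact hkey
      have h3 : (0:ℝ) < (M:ℝ) ^ k := Real.rpow_pos_of_pos hM0R k
      have h4 : ε * (M : ℝ) ^ (1 - k) = (ε / (M : ℝ) ^ k) * (M : ℝ) := by
        rw [Real.rpow_sub hM0R, Real.rpow_one]; ring
      rw [h4]
      calc (ε / (M : ℝ) ^ k) * (M : ℝ) ≤ (|y| / (M : ℝ)) * (M : ℝ) := by gcongr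
        _ = |y| := by field_simp
    have hylow' : ε * (n : ℝ) ^ (1 - k) ≤ |y| := by
      refine le_trans ?_ hylow
      have : (n : ℝ) ^ (1 - k) ≤ (M : ℝ) ^ (1 - k) :=
        Real.rpow_le_rpow_of_nonpos hM0R hMn (by norm_num [hkdef])
      gcongr
    -- |sin n| = |sin y|
    have hsineq : |Real.sin (n : ℝ)| = |Real.sin y| := by
      have : (n : ℝ) = y + (m : ℝ) * π := by rw [hy, hMm]; ring
      have h5 : |((-1:ℝ)) ^ m| = 1 := by
        rcases Int.even_or_odd m with he | ho
        · rw [he.neg_one_zpow]; norm_num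
        · rw [ho.neg_one_zpow]; norm_num
      rw [this, Real.sin_add_int_mul_pi, abs_mul, h5, one_mul]
    have hyπ : y ≤ π ∧ -π ≤ y := by
      have := abs_le.1 hyabs; constructor <;> linarith [this.1, this.2]
    have habs : |Real.sin y| = Real.sin |y| := by
      rcases le_or_gt 0 y with h | h
      · rw [abs_of_nonneg h, abs_of_nonneg (Real.sin_nonneg_of_nonneg_of_le_pi h hyπ.1)]
      · rw [abs_of_neg h, Real.sin_neg, abs_of_nonpos
          (Real.sin_nonpos_of_nonpos_of_neg_pi_le h.le hyπ.2)]
    have hy2 : |y| ≤ π / 2 := hyabs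
    have hfin : 2 / π * |y| ≤ Real.sin |y| := Real.mul_le_sin (abs_nonneg y) hy2
    rw [hsineq, habs]
    calc 2 / π * (ε * (n : ℝ) ^ (1 - k)) ≤ 2 / π * |y| := by gcongr <;> positivity
      _ ≤ Real.sin |y| := hfin
  -- summability by comparison
  have hsum : Summable (fun n : ℕ => (n : ℝ) ^ (k - 9)) :=
    Real.summable_nat_rpow.mpr (by norm_num [hkdef])
  apply summable_of_isBigO_nat hsum
  rw [Asymptotics.isBigO_iff]
  refine ⟨π / (2 * ε), ?_⟩
  filter_upwards [eventually_ge_atTop 2] with n hn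
  have hn0 : (0:ℝ) < n := by positivity
  have hs := hsin n hn
  have hsin0 : (0:ℝ) < |Real.sin (n:ℝ)| := by
    have : (0:ℝ) < 2 / π * (ε * (n : ℝ) ^ (1 - k)) := by positivity
    linarith
  have hA : (0:ℝ) < (n : ℝ) ^ 8 * |Real.sin (n:ℝ)| := by positivity
  have hrpos : (0:ℝ) < (n : ℝ) ^ (k - 9) := Real.rpow_pos_of_pos hn0 _
  rw [Real.norm_eq_abs, Real.norm_eq_abs, abs_of_pos hrpos, abs_of_pos (by positivity : (0:ℝ) < 1 / ((n : ℝ) ^ 8 * |Real.sin (n:ℝ)|))]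
  rw [div_le_iff₀ hA]
  have hcomb : (n : ℝ) ^ (k - 9) * ((n : ℝ) ^ (8:ℕ)) * (n : ℝ) ^ (1 - k) = 1 := by
    rw [← Real.rpow_natCast (n:ℝ) 8, ← Real.rpow_add hn0, ← Real.rpow_add hn0]
    norm_num
  calc (1:ℝ) = (π / (2 * ε) * (n : ℝ) ^ (k - 9)) * ((n : ℝ) ^ 8 * (2 / π * (ε * (n : ℝ) ^ (1 - k)))) := by
        rw [show (π / (2 * ε) * (n : ℝ) ^ (k - 9)) * ((n : ℝ) ^ 8 * (2 / π * (ε * (n : ℝ) ^ (1 - k))))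
            = ((n : ℝ) ^ (k - 9) * ((n : ℝ) ^ (8:ℕ)) * (n : ℝ) ^ (1 - k)) * (π / (2 * ε) * (2 / π) * ε) by ring,
          hcomb, one_mul]
        field_simp [hπ.ne', hε0.ne']
    _ ≤ (π / (2 * ε) * (n : ℝ) ^ (k - 9)) * ((n : ℝ) ^ 8 * |Real.sin (n:ℝ)|) := by
        gcongr <;> positivity
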